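/- The function $\varphi(t,x,y,\xi,\eta) = (xy - \xi\eta)\tanh t + (x\xi + y\eta)\,\mathrm{sech}\, t$ satisfies the eikonal equation $\partial_t \varphi + (\partial_x \varphi)(\partial_y \varphi) - xy = 0$ at every point $(t,x,y,\xi,\eta) \in \mathbb{R}^5$, together with the initial condition $\varphi(0,x,y,\xi,\eta) = x\xi + y\eta$. -/

import Mathlib

noncomputable section

/-- The phase `φ(t,x,y,ξ,η) = (xy - ξη)·tanh t + (xξ + yη)·sech t`. -/
def phase (t x y ξ η : ℝ) : ℝ :=
  (x * y - ξ * η) * Real.tanh t + (x * ξ + y * η) * (Real.cosh t)⁻¹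

/-- The phase `φ(t,x,y,ξ,η) = (xy-ξη) tanh t + (xξ+yη) sech t` satisfies the eikonal
equation `∂ₜφ + (∂ₓφ)(∂_yφ) - xy = 0` everywhere, with `φ(0,x,y,ξ,η) = xξ + yη`. -/
theorem phase_solves_eikonal_equation (t x y ξ η : ℝ) :
    deriv (fun s => phase s x y ξ η) t +
      deriv (fun a => phase t a y ξ η) x * deriv (fun b => phase t x b ξ η) y -
      x * y = 0 ∧
    phase 0 x y ξ η = x * ξ + y * η := by
  have hc : Real.cosh t ≠ 0 := (Real.cosh_pos t).ne'
  -- derivative in t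
  have htanh : HasDerivAt Real.tanh ((Real.cosh t * Real.cosh t - Real.sinh t * Real.sinh t)
      / Real.cosh t ^ 2) t := by
    have heq : Real.tanh = fun s => Real.sinh s / Real.cosh s :=
      funext Real.tanh_eq_sinh_div_cosh
    rw [heq]
    exact (Real.hasDerivAt_sinh t).div (Real.hasDerivAt_cosh t) hc
  have hsech : HasDerivAt (fun s => (Real.cosh s)⁻¹)
      (-(Real.sinh t) / Real.cosh t ^ 2) t := (Real.hasDerivAt_cosh t).inv hc
  have ht : HasDerivAt (fun s => phase s x y ξ η)
      ((x * y - ξ * η) * ((Real.cosh t * Real.cosh t - Real.sinh t * Real.sinh t)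
        / Real.cosh t ^ 2) + (x * ξ + y * η) * (-(Real.sinh t) / Real.cosh t ^ 2)) t := by
    exact (htanh.const_mul (x * y - ξ * η)).add
      (hsech.const_mul (x * ξ + y * η))
  -- derivative in x
  have hx : HasDerivAt (fun a => phase t a y ξ η)
      (y * Real.tanh t + ξ * (Real.cosh t)⁻¹) x := by
    have h := ((((hasDerivAt_id x).mul_const y).sub_const (ξ * η)).mul_const
      (Real.tanh t)).add
      ((((hasDerivAt_id x).mul_const ξ).add_const (y * η)).mul_const (Real.cosh t)⁻¹)
    simp only [one_mul, mul_one] at h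
    exact h
  have hy : HasDerivAt (fun b => phase t x b ξ η)
      (x * Real.tanh t + η * (Real.cosh t)⁻¹) y := by
    have h := ((((hasDerivAt_id y).const_mul x).sub_const (ξ * η)).mul_const
      (Real.tanh t)).add
      ((((hasDerivAt_id y).mul_const η).const_add (x * ξ)).mul_const (Real.cosh t)⁻¹)
    simp only [one_mul, mul_one] at h
    exact h
  refine ⟨?_, by simp [phase]⟩
  rw [ht.deriv, hx.deriv, hy.deriv]
  have hid : Real.cosh t ^ 2 - Real.sinh t ^ 2 = 1 := Real.cosh_sq_sub_sinh_sq t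
  have htanh' : Real.tanh t = Real.sinh t / Real.cosh t := Real.tanh_eq_sinh_div_cosh t
  rw [htanh']
  field_simp
  linear_combination (-(ξ * η)) * hid
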